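/- Let $G$ be a group, let $N$ be a normal subgroup of $G$, and let $M \subseteq G$ be a subgroup of finite index $i$ with $3 \nmid i$. Suppose that the quotient $G/N$ is isomorphic to the symmetric group $S_4$ or to the alternating group $A_4$, and that the image $\bar{M}$ of $M$ in $G/N$ contains a subgroup isomorphic to the Klein four-group $C_2 \times C_2$. Then $\bar{M}$ is isomorphic to $S_4$ or to $A_4$. -/
import Mathlib

lemma card_perm_four : Nat.card (Equiv.Perm (Fin 4)) = 24 := by
  rw [Nat.card_eq_fintype_card, Fintype.card_perm]; rfl

lemma card_alt_four : Nat.card (alternatingGroup (Fin 4)) = 12 := by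
  have h := two_mul_card_alternatingGroup (α := Fin 4)
  rw [Fintype.card_perm, show (Fintype.card (Fin 4)).factorial = 24 from rfl] at h
  rw [Nat.card_eq_fintype_card]
  omega

lemma index_two_eq_alternating (H : Subgroup (Equiv.Perm (Fin 4)))
    (h : H.index = 2) : H = alternatingGroup (Fin 4) := by
  have hle : alternatingGroup (Fin 4) ≤ H := by
    rw [← Equiv.Perm.closure_three_cycles_eq_alternating]
    refine (Subgroup.closure_le H).2 ?_
    intro σ hσ
    have ho : σ ^ 3 = 1 := by
      rw [← Equiv.Perm.IsThreeCycle.orderOf hσ]; exact pow_orderOf_eq_one σ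
    have hs : (σ ^ 2) ^ 2 = σ := by
      rw [← pow_mul]
      calc σ ^ (2 * 2) = σ ^ 3 * σ := by rw [← pow_succ]
      _ = σ := by rw [ho, one_mul]
    have hm := Subgroup.sq_mem_of_index_two h (σ ^ 2)
    rwa [hs] at hm
  have hc := Subgroup.card_mul_index H
  rw [h, card_perm_four] at hc
  exact (Subgroup.eq_of_le_of_card_ge hle (by rw [card_alt_four]; omega)).symm

/-- Sylow base change lemma (group-theoretic content): if `G/N ≅ S₄` or `A₄`,
`M ≤ G` has finite index `i` with `3 ∤ i`, and the image `M̄` of `M` in `G/N`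
contains a copy of the Klein four-group, then `M̄ ≅ S₄` or `M̄ ≅ A₄`. -/
theorem sylow_base_change {G : Type*} [Group G] (N : Subgroup G) [N.Normal]
    (M : Subgroup G) (i : ℕ) (hi : M.index = i) (hfin : i ≠ 0) (h3 : ¬ 3 ∣ i)
    (hquot : Nonempty ((G ⧸ N) ≃* Equiv.Perm (Fin 4)) ∨
      Nonempty ((G ⧸ N) ≃* alternatingGroup (Fin 4)))
    (Mbar : Subgroup (G ⧸ N)) (hMbar : Mbar = Subgroup.map (QuotientGroup.mk' N) M)
    (hklein : ∃ K : Subgroup (G ⧸ N), K ≤ Mbar ∧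
      Nonempty (K ≃* Multiplicative (ZMod 2) × Multiplicative (ZMod 2))) :
    Nonempty (Mbar ≃* Equiv.Perm (Fin 4)) ∨
      Nonempty (Mbar ≃* alternatingGroup (Fin 4)) := by
  -- the index of `Mbar` divides `i`, hence is not divisible by 3
  have hdvd : Mbar.index ∣ i := by
    rw [hMbar, ← hi]
    exact Subgroup.index_map_dvd M (QuotientGroup.mk'_surjective N)
  have h3bar : ¬ 3 ∣ Mbar.index := fun h => h3 (h.trans hdvd)
  -- the Klein subgroup gives `4 ∣ Nat.card Mbar`
  obtain ⟨K, hKle, ⟨eK⟩⟩ := hklein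
  have hK4 : Nat.card K = 4 := by
    rw [Nat.card_congr eK.toEquiv]
    simp [Nat.card_eq_fintype_card]
  have h4 : 4 ∣ Nat.card Mbar := hK4 ▸ Subgroup.card_dvd_of_le hKle
  rcases hquot with he | he
  · -- `G/N ≅ S₄`
    obtain ⟨e⟩ := he
    have hfin' : Finite (G ⧸ N) := Finite.of_equiv _ e.toEquiv.symm
    have hGN : Nat.card (G ⧸ N) = 24 := by
      rw [Nat.card_congr e.toEquiv, card_perm_four]
    have hmul := Subgroup.card_mul_index Mbar
    rw [hGN] at hmul
    have h3c : 3 ∣ Nat.card Mbar := by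
      rcases (Nat.Prime.dvd_mul (by norm_num)).1
          (show (3:ℕ) ∣ Nat.card Mbar * Mbar.index by rw [hmul]; norm_num) with h | h
      · exact h
      · exact absurd h h3bar
    have h12 : 12 ∣ Nat.card Mbar := Nat.Coprime.mul_dvd_of_dvd_of_dvd (by norm_num) h4 h3c
    have hdvd24 : Nat.card Mbar ∣ 24 := Dvd.intro _ hmul
    have hpos : Nat.card Mbar ≠ 0 := by
      intro h0
      rw [h0, zero_mul] at hmul
      omega
    have hle24 : Nat.card Mbar ≤ 24 := Nat.le_of_dvd (by norm_num) hdvd24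
    have hge12 : 12 ≤ Nat.card Mbar := Nat.le_of_dvd (Nat.pos_of_ne_zero hpos) h12
    have hcases : Nat.card Mbar = 12 ∨ Nat.card Mbar = 24 := by omega
    rcases hcases with h | h
    · -- card 12 : `Mbar ≅ A₄`
      right
      set H := Mbar.map (e : (G ⧸ N) →* Equiv.Perm (Fin 4)) with hH
      have eMH : Mbar ≃* H := e.subgroupMap Mbar
      have hcardH : Nat.card H = 12 := by rw [← Nat.card_congr eMH.toEquiv, h]
      have hidxH : H.index = 2 := by
        have hm := Subgroup.card_mul_index H
        rw [hcardH, card_perm_four] at hm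
        omega
      exact ⟨eMH.trans (MulEquiv.subgroupCongr (index_two_eq_alternating H hidxH))⟩
    · -- card 24 : `Mbar = ⊤`, so `Mbar ≅ S₄`
      left
      have htop : Mbar = ⊤ := Subgroup.eq_top_of_card_eq Mbar (by rw [h, hGN])
      exact ⟨(MulEquiv.subgroupCongr htop).trans (Subgroup.topEquiv.trans e)⟩
  · -- `G/N ≅ A₄`
    obtain ⟨e⟩ := he
    right
    have hfin' : Finite (G ⧸ N) := Finite.of_equiv _ e.toEquiv.symm
    have hGN : Nat.card (G ⧸ N) = 12 := by
      rw [Nat.card_congr e.toEquiv, card_alt_four]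
    have hmul := Subgroup.card_mul_index Mbar
    rw [hGN] at hmul
    have h3c : 3 ∣ Nat.card Mbar := by
      rcases (Nat.Prime.dvd_mul (by norm_num)).1
          (show (3:ℕ) ∣ Nat.card Mbar * Mbar.index by rw [hmul]; norm_num) with h | h
      · exact h
      · exact absurd h h3bar
    have h12 : 12 ∣ Nat.card Mbar := Nat.Coprime.mul_dvd_of_dvd_of_dvd (by norm_num) h4 h3c
    have hdvd12 : Nat.card Mbar ∣ 12 := Dvd.intro _ hmul
    have hc : Nat.card Mbar = 12 := Nat.dvd_antisymm hdvd12 h12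
    have htop : Mbar = ⊤ := Subgroup.eq_top_of_card_eq Mbar (by rw [hc, hGN])
    exact ⟨(MulEquiv.subgroupCongr htop).trans (Subgroup.topEquiv.trans e)⟩
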